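/- Let a_{ij} ∈ ℂ (1 ≤ i, j ≤ N) with max_i ((1/N)∑_j |a_{ij}|²)^{1/2} ≤ a, max_j ((1/N)∑_i |a_{ij}|²)^{1/2} ≤ a, and max_{i,j} |a_{ij}| ≤ A, where a ≤ A. Let G be a finite bipartite multigraph with r edges and k vertices, each vertex of degree at least 2, with vertex parts labeling row/column indices. Then val(G) := N^{−k} ∑_{s : V(G) → [N]} ∏_{{u,v} ∈ E(G)} |a_{s_u s_v}| ≤ A^{r−k} a^{k}. -/

import Mathlib

/-- Product of a multiset of reals bounded pointwise by `AA ≥ 0`. -/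
private lemma multiset_prod_le_pow {AA : ℝ} (hAA : 0 ≤ AA) (M : Multiset ℝ)
    (h0 : ∀ x ∈ M, 0 ≤ x) (h : ∀ x ∈ M, x ≤ AA) :
    M.prod ≤ AA ^ Multiset.card M := by
  induction M using Multiset.induction with
  | empty => simp
  | cons x s ih =>
      simp only [Multiset.prod_cons, Multiset.card_cons]
      rw [pow_succ']
      have hx0 : 0 ≤ x := h0 x (Multiset.mem_cons_self _ _)
      have hxA : x ≤ AA := h x (Multiset.mem_cons_self _ _)
      have hs : s.prod ≤ AA ^ Multiset.card s :=
        ih (fun y hy => h0 y (Multiset.mem_cons_of_mem hy))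
          (fun y hy => h y (Multiset.mem_cons_of_mem hy))
      have hs0 : 0 ≤ s.prod :=
        Multiset.prod_nonneg (fun y hy => h0 y (Multiset.mem_cons_of_mem hy))
      exact mul_le_mul hxA hs hs0 hAA

private lemma multiset_prod_nonneg_map {α : Type*} (M : Multiset α) (f : α → ℝ)
    (h : ∀ x, 0 ≤ f x) : 0 ≤ (M.map f).prod := by
  refine Multiset.prod_nonneg ?_
  intro y hy
  obtain ⟨x, _, rfl⟩ := Multiset.mem_map.mp hy
  exact h x

/-- Key single-vertex estimate: summing over the index at a vertex of degree `≥ 2`. -/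
private lemma key_vertex {N : ℕ}
    (a : Fin N → Fin N → ℂ) (aa AA : ℝ) (haa : 0 ≤ aa) (hAA : 0 ≤ AA)
    (hcol : ∀ j, ∑ i, ‖a i j‖ ^ 2 ≤ N * aa ^ 2)
    (hent : ∀ i j, ‖a i j‖ ≤ AA)
    (M : Multiset (Fin N)) (hM : 2 ≤ Multiset.card M) :
    ∑ i, (M.map (fun j => ‖a i j‖)).prod
      ≤ (N : ℝ) * (AA ^ (Multiset.card M - 2) * aa ^ 2) := by
  have h0 : M ≠ 0 := by intro h; simp [h] at hM
  obtain ⟨j1, hj1⟩ := Multiset.exists_mem_of_ne_zero h0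
  obtain ⟨M1, rfl⟩ := Multiset.exists_cons_of_mem hj1
  have h1 : M1 ≠ 0 := by
    intro h; rw [h] at hM; simp at hM
  obtain ⟨j2, hj2⟩ := Multiset.exists_mem_of_ne_zero h1
  obtain ⟨M2, rfl⟩ := Multiset.exists_cons_of_mem hj2
  simp only [Multiset.map_cons, Multiset.prod_cons, Multiset.card_cons]
  have hcard : Multiset.card M2 + 1 + 1 - 2 = Multiset.card M2 := by omega
  rw [hcard]
  have habs : ∀ (i j : Fin N), 0 ≤ ‖a i j‖ := fun i j => norm_nonneg _
  have step1 : ∀ i : Fin N,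
      ‖a i j1‖ * (‖a i j2‖ *
        (M2.map (fun j => ‖a i j‖)).prod)
      ≤ AA ^ Multiset.card M2 * (‖a i j1‖ * ‖a i j2‖) := by
    intro i
    have hp : (M2.map (fun j => ‖a i j‖)).prod ≤ AA ^ Multiset.card M2 := by
      have := multiset_prod_le_pow hAA (M2.map (fun j => ‖a i j‖))
        (fun x hx => by
          obtain ⟨j, _, rfl⟩ := Multiset.mem_map.mp hx; exact habs i j)
        (fun x hx => by
          obtain ⟨j, _, rfl⟩ := Multiset.mem_map.mp hx; exact hent i j)
      simpa using this
    have hp0 : 0 ≤ (M2.map (fun j => ‖a i j‖)).prod :=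
      multiset_prod_nonneg_map _ _ (habs i)
    calc ‖a i j1‖ * (‖a i j2‖ *
          (M2.map (fun j => ‖a i j‖)).prod)
        = (M2.map (fun j => ‖a i j‖)).prod *
            (‖a i j1‖ * ‖a i j2‖) := by ring
      _ ≤ AA ^ Multiset.card M2 * (‖a i j1‖ * ‖a i j2‖) := by
          exact mul_le_mul_of_nonneg_right hp (mul_nonneg (habs i j1) (habs i j2))
  have CS : ∑ i, ‖a i j1‖ * ‖a i j2‖ ≤ (N : ℝ) * aa ^ 2 := by
    have hsq : (∑ i, ‖a i j1‖ * ‖a i j2‖) ^ 2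
        ≤ (∑ i, ‖a i j1‖ ^ 2) * ∑ i, ‖a i j2‖ ^ 2 :=
      Finset.sum_mul_sq_le_sq_mul_sq Finset.univ _ _
    have hb : (∑ i, ‖a i j1‖ ^ 2) * ∑ i, ‖a i j2‖ ^ 2
        ≤ ((N : ℝ) * aa ^ 2) * ((N : ℝ) * aa ^ 2) := by
      have h1 := hcol j1
      have h2 := hcol j2
      have hn1 : (0:ℝ) ≤ ∑ i, ‖a i j1‖ ^ 2 :=
        Finset.sum_nonneg fun i _ => sq_nonneg _
      have hb0 : (0:ℝ) ≤ (N : ℝ) * aa ^ 2 :=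
        mul_nonneg (Nat.cast_nonneg _) (sq_nonneg _)
      exact mul_le_mul h1 h2 (Finset.sum_nonneg fun i _ => sq_nonneg _) hb0
    have hS0 : 0 ≤ ∑ i, ‖a i j1‖ * ‖a i j2‖ :=
      Finset.sum_nonneg fun i _ => mul_nonneg (habs i j1) (habs i j2)
    have hb0 : (0:ℝ) ≤ (N : ℝ) * aa ^ 2 :=
      mul_nonneg (Nat.cast_nonneg _) (sq_nonneg _)
    have : (∑ i, ‖a i j1‖ * ‖a i j2‖) ^ 2
        ≤ ((N : ℝ) * aa ^ 2) ^ 2 := by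
      calc _ ≤ (∑ i, ‖a i j1‖ ^ 2) * ∑ i, ‖a i j2‖ ^ 2 := hsq
        _ ≤ _ := by rw [sq]; exact hb
    exact (pow_le_pow_iff_left₀ hS0 hb0 (by norm_num)).mp this
  calc ∑ i, ‖a i j1‖ * (‖a i j2‖ *
        (M2.map (fun j => ‖a i j‖)).prod)
      ≤ ∑ i, AA ^ Multiset.card M2 * (‖a i j1‖ * ‖a i j2‖) :=
        Finset.sum_le_sum fun i _ => step1 i
    _ = AA ^ Multiset.card M2 * ∑ i, ‖a i j1‖ * ‖a i j2‖ := by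
        rw [Finset.mul_sum]
    _ ≤ AA ^ Multiset.card M2 * ((N : ℝ) * aa ^ 2) :=
        mul_le_mul_of_nonneg_left CS (pow_nonneg hAA _)
    _ = (N : ℝ) * (AA ^ Multiset.card M2 * aa ^ 2) := by ring

private lemma fiber_sum {U W : Type*} [Fintype U] [DecidableEq U] [DecidableEq W] (E : Multiset (U × W)) :
    ∑ u : U, E.filter (fun e => e.1 = u) = E := by
  refine Multiset.ext.mpr fun e => ?_
  rw [Multiset.count_sum']
  simp [Multiset.count_filter]

private lemma card_fiber_sum {U W : Type*} [Fintype U] [DecidableEq U] [DecidableEq W] (E : Multiset (U × W)) :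
    ∑ u : U, Multiset.card (E.filter (fun e => e.1 = u)) = Multiset.card E := by
  conv_rhs => rw [← fiber_sum E]
  induction (Finset.univ : Finset U) using Finset.cons_induction with
  | empty => simp
  | cons a s has ih => simp [Finset.sum_cons, ih]

/-- Main one-sided bound: summing over all row indices first. -/
private lemma main_bound {N : ℕ}
    {U W : Type*} [Fintype U] [Fintype W] [DecidableEq U] [DecidableEq W]
    (a : Fin N → Fin N → ℂ) (aa AA : ℝ) (haa : 0 ≤ aa) (hAA : 0 ≤ AA)
    (hcol : ∀ j, ∑ i, ‖a i j‖ ^ 2 ≤ N * aa ^ 2)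
    (hent : ∀ i j, ‖a i j‖ ≤ AA)
    (E : Multiset (U × W))
    (hdegU : ∀ u : U, 2 ≤ Multiset.card (E.filter (fun e => e.1 = u))) :
    ∑ su : U → Fin N, ∑ sw : W → Fin N,
        (E.map (fun e => ‖a (su e.1) (sw e.2)‖)).prod
      ≤ (N : ℝ) ^ (Fintype.card U + Fintype.card W) *
          (AA ^ (Multiset.card E - 2 * Fintype.card U) * aa ^ (2 * Fintype.card U)) := by
  have habs : ∀ (i j : Fin N), 0 ≤ ‖a i j‖ := fun i j => norm_nonneg _
  rw [Finset.sum_comm]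
  set d : U → ℕ := fun u => Multiset.card (E.filter (fun e => e.1 = u)) with hd
  have hsumd : ∑ u : U, d u = Multiset.card E := card_fiber_sum E
  have hdsub : ∑ u : U, (d u - 2) = Multiset.card E - 2 * Fintype.card U := by
    have h1 : ∑ u : U, (d u - 2) + Fintype.card U * 2 = ∑ u : U, d u := by
      rw [← smul_eq_mul, ← Finset.card_univ, ← Finset.sum_const, ← Finset.sum_add_distrib]
      exact Finset.sum_congr rfl fun u _ => Nat.sub_add_cancel (hdegU u)
    omega
  have key : ∀ sw : W → Fin N,
      ∑ su : U → Fin N, (E.map (fun e => ‖a (su e.1) (sw e.2)‖)).prod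
        ≤ (N : ℝ) ^ (Fintype.card U) *
            (AA ^ (Multiset.card E - 2 * Fintype.card U) * aa ^ (2 * Fintype.card U)) := by
    intro sw
    have h1 : ∀ su : U → Fin N,
        (E.map (fun e => ‖a (su e.1) (sw e.2)‖)).prod
          = ∏ u : U, ((E.filter (fun e => e.1 = u)).map
              (fun e => ‖a (su u) (sw e.2)‖)).prod := by
      intro su
      conv_lhs => rw [← fiber_sum E]
      rw [show ((∑ u : U, E.filter (fun e => e.1 = u)).map
            (fun e => ‖a (su e.1) (sw e.2)‖))
          = ∑ u : U, ((E.filter (fun e => e.1 = u)).map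
              (fun e => ‖a (su e.1) (sw e.2)‖)) from
        map_sum (Multiset.mapAddMonoidHom _) _ _]
      rw [Multiset.prod_sum]
      refine Finset.prod_congr rfl fun u _ => ?_
      congr 1
      refine Multiset.map_congr rfl fun e he => ?_
      have : e.1 = u := (Multiset.mem_filter.mp he).2
      rw [this]
    calc ∑ su : U → Fin N, (E.map (fun e => ‖a (su e.1) (sw e.2)‖)).prod
        = ∑ su : U → Fin N, ∏ u : U, ((E.filter (fun e => e.1 = u)).map
            (fun e => ‖a (su u) (sw e.2)‖)).prod :=
          Finset.sum_congr rfl fun su _ => h1 su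
      _ = ∏ u : U, ∑ i : Fin N, ((E.filter (fun e => e.1 = u)).map
            (fun e => ‖a i (sw e.2)‖)).prod := by
          rw [Finset.prod_univ_sum]
          rw [Fintype.piFinset_univ]
      _ ≤ ∏ u : U, (N : ℝ) * (AA ^ (d u - 2) * aa ^ 2) := by
          refine Finset.prod_le_prod (fun u _ => ?_) (fun u _ => ?_)
          · exact Finset.sum_nonneg fun i _ =>
              multiset_prod_nonneg_map _ _ (fun e => habs i (sw e.2))
          · have := key_vertex a aa AA haa hAA hcol hent
              ((E.filter (fun e => e.1 = u)).map (fun e => sw e.2))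
              (by rw [Multiset.card_map]; exact hdegU u)
            simp only [Multiset.map_map, Multiset.card_map, Function.comp] at this
            exact this
      _ = (N : ℝ) ^ (Fintype.card U) *
            (AA ^ (Multiset.card E - 2 * Fintype.card U) * aa ^ (2 * Fintype.card U)) := by
          rw [Finset.prod_mul_distrib, Finset.prod_mul_distrib]
          rw [Finset.prod_const, Finset.prod_const, Finset.card_univ,
            Finset.prod_pow_eq_pow_sum, hdsub, ← pow_mul]
  calc ∑ sw : W → Fin N, ∑ su : U → Fin N,
        (E.map (fun e => ‖a (su e.1) (sw e.2)‖)).prod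
      ≤ ∑ _sw : W → Fin N, (N : ℝ) ^ (Fintype.card U) *
          (AA ^ (Multiset.card E - 2 * Fintype.card U) * aa ^ (2 * Fintype.card U)) :=
        Finset.sum_le_sum fun sw _ => key sw
    _ = (N : ℝ) ^ (Fintype.card U + Fintype.card W) *
          (AA ^ (Multiset.card E - 2 * Fintype.card U) * aa ^ (2 * Fintype.card U)) := by
        rw [Finset.sum_const, Finset.card_univ, nsmul_eq_mul]
        rw [Fintype.card_fun, Fintype.card_fin, pow_add]
        push_cast
        ring

private lemma final_compare (aa AA : ℝ) (haa : 0 ≤ aa) (haA : aa ≤ AA)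
    {r p q : ℕ} (hq : q ≤ p) (hr : 2 * p ≤ r) :
    AA ^ (r - 2 * p) * aa ^ (2 * p) ≤ AA ^ (r - (p + q)) * aa ^ (p + q) := by
  have hAA : 0 ≤ AA := haa.trans haA
  have h1 : r - (p + q) = (r - 2 * p) + (p - q) := by omega
  have h2 : 2 * p = (p + q) + (p - q) := by omega
  calc AA ^ (r - 2 * p) * aa ^ (2 * p)
      = AA ^ (r - 2 * p) * (aa ^ (p + q) * aa ^ (p - q)) := by
        nth_rewrite 2 [h2]; rw [pow_add]
    _ ≤ AA ^ (r - 2 * p) * (aa ^ (p + q) * AA ^ (p - q)) := by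
        refine mul_le_mul_of_nonneg_left ?_ (pow_nonneg hAA _)
        exact mul_le_mul_of_nonneg_left (pow_le_pow_left₀ haa haA _) (pow_nonneg haa _)
    _ = AA ^ ((r - 2 * p) + (p - q)) * aa ^ (p + q) := by rw [pow_add]; ring
    _ = AA ^ (r - (p + q)) * aa ^ (p + q) := by rw [← h1]

/-- Value bound for a bipartite multigraph: let `a_{ij}` have row/column `ℓ²` norms `≤ aa`
and entries `≤ AA` with `aa ≤ AA`. Let `G` be a finite bipartite multigraph with row-vertex
type `U`, column-vertex type `W`, edge multiset `E ⊆ U × W`, every vertex of degree `≥ 2`,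
`r` edges, and `k = |U| + |W|` vertices. Then
`val(G) = N^{−k} ∑_{s} ∏_{(u,w) ∈ E} |a_{s(u) s(w)}| ≤ AA^{r−k} aa^k`. -/
theorem stmt_17 {N : ℕ} (hN : 0 < N)
    {U W : Type*} [Fintype U] [Fintype W] [DecidableEq U] [DecidableEq W]
    (a : Fin N → Fin N → ℂ) (aa AA : ℝ) (haA : aa ≤ AA)
    (hrow : ∀ i, Real.sqrt ((1 / N) * ∑ j, ‖a i j‖ ^ 2) ≤ aa)
    (hcol : ∀ j, Real.sqrt ((1 / N) * ∑ i, ‖a i j‖ ^ 2) ≤ aa)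
    (hent : ∀ i j, ‖a i j‖ ≤ AA)
    (E : Multiset (U × W))
    (hdegU : ∀ u : U, 2 ≤ Multiset.card (E.filter (fun e => e.1 = u)))
    (hdegW : ∀ w : W, 2 ≤ Multiset.card (E.filter (fun e => e.2 = w))) :
    (1 / (N : ℝ) ^ (Fintype.card U + Fintype.card W)) *
        ∑ su : U → Fin N, ∑ sw : W → Fin N,
          (E.map (fun e => ‖a (su e.1) (sw e.2)‖)).prod
      ≤ AA ^ (Multiset.card E - (Fintype.card U + Fintype.card W)) *
          aa ^ (Fintype.card U + Fintype.card W) := by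
  have i0 : Fin N := ⟨0, hN⟩
  have haa : 0 ≤ aa := le_trans (Real.sqrt_nonneg _) (hcol i0)
  have hAA : 0 ≤ AA := haa.trans haA
  have hNpos : (0:ℝ) < (N : ℝ) := by exact_mod_cast hN
  -- convert the sqrt hypotheses to sum bounds
  have hconv : ∀ (S : ℝ), 0 ≤ S → Real.sqrt ((1 / N) * S) ≤ aa → S ≤ N * aa ^ 2 := by
    intro S hS h
    have hx : (0:ℝ) ≤ (1 / N) * S := mul_nonneg (by positivity) hS
    have := Real.sq_sqrt hx
    have h2 : (1 / (N:ℝ)) * S ≤ aa ^ 2 := by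
      calc (1 / (N:ℝ)) * S = Real.sqrt ((1 / N) * S) ^ 2 := (this).symm
        _ ≤ aa ^ 2 := pow_le_pow_left₀ (Real.sqrt_nonneg _) h 2
    calc S = (N:ℝ) * ((1 / N) * S) := by field_simp
      _ ≤ (N:ℝ) * aa ^ 2 := mul_le_mul_of_nonneg_left h2 hNpos.le
  have hcol' : ∀ j, ∑ i, ‖a i j‖ ^ 2 ≤ N * aa ^ 2 := fun j =>
    hconv _ (Finset.sum_nonneg fun i _ => sq_nonneg _) (hcol j)
  have hrow' : ∀ i, ∑ j, ‖a i j‖ ^ 2 ≤ N * aa ^ 2 := fun i =>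
    hconv _ (Finset.sum_nonneg fun j _ => sq_nonneg _) (hrow i)
  set p := Fintype.card U
  set q := Fintype.card W
  set r := Multiset.card E
  have hdiv : ∀ B : ℝ,
      (∑ su : U → Fin N, ∑ sw : W → Fin N,
          (E.map (fun e => ‖a (su e.1) (sw e.2)‖)).prod)
        ≤ (N : ℝ) ^ (p + q) * B →
      (1 / (N : ℝ) ^ (p + q)) *
        (∑ su : U → Fin N, ∑ sw : W → Fin N,
          (E.map (fun e => ‖a (su e.1) (sw e.2)‖)).prod) ≤ B := by
    intro B hB
    have hNp : (0:ℝ) < (N : ℝ) ^ (p + q) := pow_pos hNpos _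
    calc (1 / (N : ℝ) ^ (p + q)) * _ ≤ (1 / (N : ℝ) ^ (p + q)) * ((N : ℝ) ^ (p + q) * B) :=
          mul_le_mul_of_nonneg_left hB (by positivity)
      _ = B := by field_simp
  by_cases hpq : q ≤ p
  · -- sum over U first
    have hmain := main_bound a aa AA haa hAA hcol' hent E hdegU
    have hr2p : 2 * p ≤ r := by
      have := card_fiber_sum E
      have h2 : ∑ u : U, 2 ≤ ∑ u : U, Multiset.card (E.filter (fun e => e.1 = u)) :=
        Finset.sum_le_sum fun u _ => hdegU u
      simp only [Finset.sum_const, Finset.card_univ, smul_eq_mul] at h2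
      omega
    exact le_trans (hdiv _ hmain) (final_compare aa AA haa haA hpq hr2p)
  · -- transpose: sum over W first
    push_neg at hpq
    set a' : Fin N → Fin N → ℂ := fun i j => a j i with ha'
    set E' : Multiset (W × U) := E.map Prod.swap with hE'
    have hdeg' : ∀ w : W, 2 ≤ Multiset.card (E'.filter (fun e => e.1 = w)) := by
      intro w
      rw [hE', Multiset.filter_map, Multiset.card_map]
      exact hdegW w
    have hmain := main_bound a' aa AA haa hAA (fun j => hrow' j) (fun i j => hent j i) E' hdeg'
    have hcardE' : Multiset.card E' = r := by rw [hE', Multiset.card_map]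
    have hsum_eq :
        ∑ su : U → Fin N, ∑ sw : W → Fin N,
            (E.map (fun e => ‖a (su e.1) (sw e.2)‖)).prod
          = ∑ sw : W → Fin N, ∑ su : U → Fin N,
            (E'.map (fun e => ‖a' (sw e.1) (su e.2)‖)).prod := by
      rw [Finset.sum_comm]
      refine Finset.sum_congr rfl fun sw _ => Finset.sum_congr rfl fun su _ => ?_
      rw [hE', Multiset.map_map]
      rfl
    have hr2q : 2 * q ≤ r := by
      have := card_fiber_sum E'
      rw [hcardE'] at this
      have h2 : ∑ w : W, 2 ≤ ∑ w : W, Multiset.card (E'.filter (fun e => e.1 = w)) :=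
        Finset.sum_le_sum fun w _ => hdeg' w
      simp only [Finset.sum_const, Finset.card_univ, smul_eq_mul] at h2
      omega
    rw [hcardE'] at hmain
    have hmain' : ∑ su : U → Fin N, ∑ sw : W → Fin N,
          (E.map (fun e => ‖a (su e.1) (sw e.2)‖)).prod
        ≤ (N : ℝ) ^ (p + q) * (AA ^ (r - 2 * q) * aa ^ (2 * q)) := by
      rw [hsum_eq]
      calc _ ≤ (N : ℝ) ^ (q + p) * (AA ^ (r - 2 * q) * aa ^ (2 * q)) := hmain
        _ = (N : ℝ) ^ (p + q) * (AA ^ (r - 2 * q) * aa ^ (2 * q)) := by rw [add_comm q p]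
    refine le_trans (hdiv _ hmain') ?_
    have h := final_compare aa AA haa haA (le_of_lt hpq) hr2q
    rw [add_comm q p] at h
    exact h
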